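/- Let S be a nonempty finite set, let B₁, ε > 0 be reals, let K and L be reals with K ≥ max(1, |S|) and L ≥ 1, let n : S → ℝ with n(i) > 0 for all i, and let δ : S → ℝ and Δ > 0 satisfy 0 < δ(i) ≤ Δ for all i ∈ S. Suppose Δ ≤ B₁·∑_{i∈S} (4√(L/n(i)) + 24·K·L³/(n(i)·ε)). Then Δ ≤ 2·B₁·∑_{i∈S, n(i) ≤ N(i)} (4√(L/n(i)) + 24·K·L³/(n(i)·ε)), where N(i) = max(256·B₁²·K²·L/δ(i)², 96·B₁·K²·L³/(ε·δ(i))) and the sum ranges only over those i ∈ S whose counter n(i) does not exceed N(i). -/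

import Mathlib

/-- Gap-doubling combined with the counter-threshold computation for the
ε-differentially private CUCB algorithm: when the 'bad event' occurs (the gap `Δ` of the
played super arm `S` is bounded by `B₁` times the sum of confidence widths), the gap is
controlled by twice the sum of confidence widths over the underexplored base arms, i.e.
those whose counter `n i` does not exceed
`N i = max (256 B₁² K² L / (δ i)²) (96 B₁ K² L³ / (ε · δ i))`. -/
theorem stmt2 {α : Type*} (S : Finset α) (hS : S.Nonempty) (B₁ ε K L Δ : ℝ)
    (hB : 0 < B₁) (hε : 0 < ε) (hK : max 1 (S.card : ℝ) ≤ K) (hL : 1 ≤ L)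
    (n δ : α → ℝ) (hn : ∀ i ∈ S, 0 < n i)
    (hδ : ∀ i ∈ S, 0 < δ i ∧ δ i ≤ Δ) (hΔ : 0 < Δ)
    (h : Δ ≤ B₁ * ∑ i ∈ S, (4 * Real.sqrt (L / n i) + 24 * K * L ^ 3 / (n i * ε))) :
    Δ ≤ 2 * B₁ * ∑ i ∈ S.filter (fun i =>
        n i ≤ max (256 * B₁ ^ 2 * K ^ 2 * L / (δ i) ^ 2)
          (96 * B₁ * K ^ 2 * L ^ 3 / (ε * δ i))),
      (4 * Real.sqrt (L / n i) + 24 * K * L ^ 3 / (n i * ε)) := by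
  classical
  have hK1 : (1 : ℝ) ≤ K := le_trans (le_max_left _ _) hK
  have hK0 : (0 : ℝ) < K := lt_of_lt_of_le one_pos hK1
  have hL0 : (0 : ℝ) < L := lt_of_lt_of_le one_pos hL
  set P : α → Prop := fun i =>
      n i ≤ max (256 * B₁ ^ 2 * K ^ 2 * L / (δ i) ^ 2)
        (96 * B₁ * K ^ 2 * L ^ 3 / (ε * δ i)) with hP
  set w : α → ℝ := fun i => 4 * Real.sqrt (L / n i) + 24 * K * L ^ 3 / (n i * ε) with hw
  -- per-arm bound on complement
  have key : ∀ i ∈ S.filter (fun i => ¬ P i), w i ≤ Δ / (2 * B₁ * K) := by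
    intro i hi
    rw [Finset.mem_filter] at hi
    obtain ⟨hiS, hiNP⟩ := hi
    have hni := hn i hiS
    have hδi := (hδ i hiS).1
    have hδΔ := (hδ i hiS).2
    rw [hP, not_le, max_lt_iff] at hiNP
    obtain ⟨hA, hB2⟩ := hiNP
    -- sqrt term
    have hAx : 256 * B₁ ^ 2 * K ^ 2 * L / (δ i) ^ 2 < n i := hA
    have hden : (0 : ℝ) < 256 * B₁ ^ 2 * K ^ 2 := by positivity
    have h1 : L / n i ≤ (δ i / (16 * B₁ * K)) ^ 2 := by
      rw [div_le_iff₀ hni, div_pow]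
      have h2 : (16 * B₁ * K) ^ 2 = 256 * B₁ ^ 2 * K ^ 2 := by ring
      rw [h2, div_mul_eq_mul_div, le_div_iff₀ hden]
      have := (div_lt_iff₀ (by positivity : (0:ℝ) < (δ i)^2)).mp hAx
      nlinarith
    have hs1 : Real.sqrt (L / n i) ≤ δ i / (16 * B₁ * K) := by
      have := Real.sqrt_le_sqrt h1
      rwa [Real.sqrt_sq (by positivity)] at this
    have t1 : 4 * Real.sqrt (L / n i) ≤ Δ / (4 * B₁ * K) := by
      have : 4 * Real.sqrt (L / n i) ≤ 4 * (δ i / (16 * B₁ * K)) := by linarith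
      refine this.trans ?_
      have e : 4 * (δ i / (16 * B₁ * K)) = δ i / (4 * B₁ * K) := by
        field_simp; ring
      rw [e]
      gcongr
    -- laplace term
    have t2 : 24 * K * L ^ 3 / (n i * ε) ≤ Δ / (4 * B₁ * K) := by
      rw [div_le_div_iff₀ (by positivity) (by positivity)]
      have := (div_lt_iff₀ (by positivity : (0:ℝ) < ε * δ i)).mp hB2
      nlinarith [mul_pos hni hε, mul_pos hΔ hε, mul_pos hni (mul_pos hε (sub_pos.mpr (lt_of_lt_of_le hδi (le_refl (δ i)))))]
    have : w i ≤ Δ / (4 * B₁ * K) + Δ / (4 * B₁ * K) := add_le_add t1 t2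
    refine this.trans ?_
    rw [← add_div, div_le_div_iff₀ (by positivity) (by positivity)]
    ring_nf
    nlinarith
  -- sum over complement
  have hcomp : B₁ * ∑ i ∈ S.filter (fun i => ¬ P i), w i ≤ Δ / 2 := by
    have hsum : ∑ i ∈ S.filter (fun i => ¬ P i), w i ≤
        (S.filter (fun i => ¬ P i)).card * (Δ / (2 * B₁ * K)) := by
      have := Finset.sum_le_card_nsmul _ w (Δ / (2 * B₁ * K)) key
      rwa [nsmul_eq_mul] at this
    have hcard : ((S.filter (fun i => ¬ P i)).card : ℝ) ≤ K :=
      le_trans (by exact_mod_cast Nat.cast_le.mpr (Finset.card_filter_le _ _))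
        (le_trans (le_max_right _ _) hK)
    have hpos : (0 : ℝ) ≤ Δ / (2 * B₁ * K) := by positivity
    have : ∑ i ∈ S.filter (fun i => ¬ P i), w i ≤ K * (Δ / (2 * B₁ * K)) :=
      hsum.trans (mul_le_mul_of_nonneg_right hcard hpos)
    have hKval : K * (Δ / (2 * B₁ * K)) = Δ / (2 * B₁) := by
      field_simp
    rw [hKval] at this
    calc B₁ * ∑ i ∈ S.filter (fun i => ¬ P i), w i ≤ B₁ * (Δ / (2 * B₁)) :=
          mul_le_mul_of_nonneg_left this hB.le
      _ = Δ / 2 := by field_simp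
  have hsplit : ∑ i ∈ S, w i =
      ∑ i ∈ S.filter P, w i + ∑ i ∈ S.filter (fun i => ¬ P i), w i :=
    (Finset.sum_filter_add_sum_filter_not S P w).symm
  have hmain : Δ ≤ B₁ * ∑ i ∈ S.filter P, w i + Δ / 2 := by
    calc Δ ≤ B₁ * ∑ i ∈ S, w i := h
      _ = B₁ * ∑ i ∈ S.filter P, w i + B₁ * ∑ i ∈ S.filter (fun i => ¬ P i), w i := by
          rw [hsplit]; ring
      _ ≤ B₁ * ∑ i ∈ S.filter P, w i + Δ / 2 := by linarith
  linarith
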